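/- For every positive integer k ≥ 1, the number (4k+3)/(2k+1) belongs to ℒ_{6k+1}(6k+4), and (4k+3) · ((2k+1)/(4k+3)) = (6k+4) − (4k+3). -/

import Mathlib

open Finset

/-- The set `ℒ_r(α)`: the smallest set of reals containing `α - 1` and closed under the rule:
for `1 ≤ s ≤ r - 1` and `q₁, …, q_s ∈ ℒ_r(α)`, if `β := α − 1 − s − ∑ qᵢ⁻¹ > 0`
then `β ∈ ℒ_r(α)`. -/
inductive LSet (r : ℕ) (α : ℝ) : ℝ → Prop
  | base : LSet r α (α - 1)
  | step (s : ℕ) (hs1 : 1 ≤ s) (hsr : s ≤ r - 1) (q : Fin s → ℝ)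
      (hmem : ∀ i, LSet r α (q i))
      (hpos : 0 < α - 1 - (s : ℝ) - ∑ i, (q i)⁻¹) :
      LSet r α (α - 1 - (s : ℝ) - ∑ i, (q i)⁻¹)

theorem stmt_16 (k : ℕ) (hk : 1 ≤ k) :
    LSet (6 * k + 1) (6 * (k : ℝ) + 4) ((4 * (k : ℝ) + 3) / (2 * (k : ℝ) + 1)) ∧
      (4 * (k : ℝ) + 3) * ((2 * (k : ℝ) + 1) / (4 * (k : ℝ) + 3)) =
        (6 * (k : ℝ) + 4) - (4 * (k : ℝ) + 3) := by
  have h2 : (2 * (k : ℝ) + 1) ≠ 0 := by positivity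
  have h4 : (4 * (k : ℝ) + 3) ≠ 0 := by positivity
  constructor
  · have h : ((4 * (k : ℝ) + 3) / (2 * (k : ℝ) + 1)) =
        (6 * (k : ℝ) + 4) - 1 - ((6 * k : ℕ) : ℝ) -
          ∑ _i : Fin (6 * k), ((6 * (k : ℝ) + 4) - 1)⁻¹ := by
      rw [Finset.sum_const, Finset.card_univ, Fintype.card_fin]
      push_cast
      have h6 : (6 * (k : ℝ) + 4) - 1 ≠ 0 := by
        have : (0:ℝ) < 6 * (k : ℝ) + 3 := by positivity
        intro h; rw [show (6 * (k : ℝ) + 4) - 1 = 6 * k + 3 by ring] at h; linarith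
      rw [nsmul_eq_mul]; push_cast
      rw [show (6 * (k : ℝ) + 4) - 1 = 6 * k + 3 by ring] at h6 ⊢
      field_simp
      ring
    rw [h]
    refine LSet.step (6 * k) (by omega) (by omega) _ (fun _ => LSet.base) ?_
    rw [← h]
    positivity
  · field_simp
    ring
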